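/- There is an absolute constant C > 0 such that the following holds. Let F ⊆ {0,1}^X have finite VC dimension d ≥ 1 and let k ≥ 1. Define the class G ⊆ {0,1}^{X^k × ℝ} by G = {g_f : f ∈ F}, where g_f((x_1,…,x_k), α) = 1{(1/k)·Σ_{j=1}^k f(x_j) ≠ α}. Then the VC dimension of G is at most C·d·log(2k). -/

import Mathlib

open MeasureTheory Finset
open scoped ENNReal NNReal

noncomputable section

namespace LLP

/-- Real value of a Boolean label/prediction (`0` or `1`). -/
def bval (b : Bool) : ℝ := if b then 1 else 0

/-- Label proportion `α` of a bag of `k` labeled examples. -/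
def labelProp {X : Type*} {k : ℕ} (bag : Fin k → X × Bool) : ℝ :=
  (∑ j, bval (bag j).2) / (k : ℝ)

/-- Average prediction `(1/k)·Σ_j f(x_j)` of `f` on a bag. -/
def predProp {X : Type*} {k : ℕ} (f : X → Bool) (bag : Fin k → X × Bool) : ℝ :=
  (∑ j, bval (f (bag j).1)) / (k : ℝ)

/-- Instance-level classification loss `L(f) = Pr_{(x,y)∼D}[f(x) ≠ y]`. -/
def err {X : Type*} [MeasurableSpace X] (D : Measure (X × Bool)) (f : X → Bool) : ℝ :=
  (D {p | f p.1 ≠ p.2}).toReal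

/-- `S` is shattered by the Boolean-valued class `F`. -/
def Shatters {Z : Type*} (F : Set (Z → Bool)) (S : Finset Z) : Prop :=
  ∀ T ⊆ S, ∃ f ∈ F, ∀ z ∈ S, (f z = true ↔ z ∈ T)

/-- The VC dimension of `F` is at most `d`. -/
def VCDimLE {Z : Type*} (F : Set (Z → Bool)) (d : ℕ) : Prop :=
  ∀ S : Finset Z, Shatters F S → S.card ≤ d

/-- Joint distribution of `n` i.i.d. bags, each consisting of `k` i.i.d. draws from `D`. -/
def bagMeasure {X : Type*} [MeasurableSpace X] (D : Measure (X × Bool)) (n k : ℕ) :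
    Measure (Fin n → Fin k → X × Bool) :=
  Measure.pi fun _ => Measure.pi fun _ => D

/-- Empirical proportional (0-1) risk: fraction of bags whose predicted proportion
mismatches the observed label proportion. -/
def empPM {X : Type*} {n k : ℕ} (f : X → Bool) (ω : Fin n → Fin k → X × Bool) : ℝ :=
  (∑ i, if predProp f (ω i) = labelProp (ω i) then (0 : ℝ) else 1) / (n : ℝ)

/-- Empirical proportional square loss. -/
def empSQ {X : Type*} {n k : ℕ} (f : X → Bool) (ω : Fin n → Fin k → X × Bool) : ℝ :=
  (∑ i, (predProp f (ω i) - labelProp (ω i)) ^ 2) / (n : ℝ)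

/-- The EasyLLP estimate of the 0-1 loss on a single bag, using marginal label
proportion `p`. -/
def ellEZ {X : Type*} {k : ℕ} (p : ℝ) (f : X → Bool) (bag : Fin k → X × Bool) : ℝ :=
  ((k : ℝ) * (labelProp bag - p) + p) * (1 - predProp f bag)
    + ((k : ℝ) * (p - labelProp bag) + (1 - p)) * predProp f bag

/-- Marginal label proportion `p = Pr[y = 1]`. -/
def labelP {X : Type*} [MeasurableSpace X] (D : Measure (X × Bool)) : ℝ :=
  (D {q | q.2 = true}).toReal

end LLP

namespace LLP

/-- The proportion-mismatch class `G = {g_f : f ∈ F}` on bags with proportions, where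
`g_f((x_1,…,x_k), α) = 1{(1/k)·Σ_j f(x_j) ≠ α}`. -/
def mismatchClass {X : Type*} (F : Set (X → Bool)) (k : ℕ) :
    Set ((Fin k → X) × ℝ → Bool) :=
  {g | ∃ f ∈ F, g = fun Bα => decide ((∑ j, bval (f (Bα.1 j))) / (k : ℝ) ≠ Bα.2)}

lemma log_le_div_exp_aux {x : ℝ} (hx : 0 < x) : Real.log x ≤ x / Real.exp 1 := by
  have h := Real.log_le_sub_one_of_pos (x := x / Real.exp 1) (by positivity)
  rw [Real.log_div (ne_of_gt hx) (Real.exp_ne_zero 1), Real.log_exp] at h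
  linarith

lemma sum_choose_le_exp_mul_aux (n d : ℕ) (hd : 1 ≤ d) (hdn : d ≤ n) :
    (∑ i ∈ Finset.range (d + 1), (n.choose i : ℝ)) ≤ Real.exp d * ((n : ℝ) / d) ^ d := by
  have hn0 : 0 < (n : ℝ) := by
    have : 1 ≤ n := le_trans hd hdn
    exact_mod_cast this
  have hd0 : 0 < (d : ℝ) := by exact_mod_cast hd
  set x : ℝ := (d : ℝ) / n with hxdef
  have hx0 : 0 < x := by positivity
  have hx1 : x ≤ 1 := by
    rw [hxdef, div_le_one hn0]
    exact_mod_cast hdn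
  have key : (∑ i ∈ Finset.range (d + 1), (n.choose i : ℝ)) * x ^ d ≤ Real.exp d := by
    calc (∑ i ∈ Finset.range (d + 1), (n.choose i : ℝ)) * x ^ d
        = ∑ i ∈ Finset.range (d + 1), (n.choose i : ℝ) * x ^ d := by rw [Finset.sum_mul]
      _ ≤ ∑ i ∈ Finset.range (d + 1), (n.choose i : ℝ) * x ^ i := by
          refine Finset.sum_le_sum fun i hi => ?_
          have hi' : i ≤ d := by
            have := Finset.mem_range.1 hi; omega
          exact mul_le_mul_of_nonneg_left
            (pow_le_pow_of_le_one hx0.le hx1 hi') (Nat.cast_nonneg _)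
      _ ≤ ∑ i ∈ Finset.range (n + 1), (n.choose i : ℝ) * x ^ i := by
          refine Finset.sum_le_sum_of_subset_of_nonneg
            (Finset.range_subset_range.2 (by omega)) fun i _ _ => by positivity
      _ = (x + 1) ^ n := by
          rw [add_pow]
          refine Finset.sum_congr rfl fun i _ => by ring
      _ ≤ (Real.exp x) ^ n := by
          refine pow_le_pow_left₀ (by positivity) ?_ n
          linarith [Real.add_one_le_exp x]
      _ = Real.exp ((n : ℝ) * x) := by rw [← Real.exp_nat_mul]
      _ = Real.exp d := by
          congr 1
          rw [hxdef]
          field_simp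
  have hxd : 0 < x ^ d := pow_pos hx0 d
  have h1 : (∑ i ∈ Finset.range (d + 1), (n.choose i : ℝ)) ≤ Real.exp d / x ^ d :=
    (le_div_iff₀ hxd).2 key
  calc (∑ i ∈ Finset.range (d + 1), (n.choose i : ℝ)) ≤ Real.exp d / x ^ d := h1
    _ = Real.exp d * ((n : ℝ) / d) ^ d := by
        rw [div_eq_mul_inv, ← inv_pow]
        congr 2
        rw [hxdef, inv_div]

set_option maxHeartbeats 1000000 in
theorem vc_dimension_mismatch_class_aux :
    ∃ C : ℝ, 0 < C ∧
      ∀ (X : Type) (F : Set (X → Bool)) (d k : ℕ), 1 ≤ d → 1 ≤ k →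
        VCDimLE F d →
        ∀ S : Finset ((Fin k → X) × ℝ), Shatters (mismatchClass F k) S →
          (S.card : ℝ) ≤ C * (d : ℝ) * Real.log (2 * (k : ℝ)) := by
  classical
  refine ⟨15, by norm_num, ?_⟩
  intro X F d k hd hk hVC S hS
  set m := S.card with hm
  have hlog2 : (0.6931471803 : ℝ) < Real.log 2 := Real.log_two_gt_d9
  have hk0 : (0 : ℝ) < (k : ℝ) := by exact_mod_cast hk
  have hd0 : (0 : ℝ) < (d : ℝ) := by exact_mod_cast hd
  have hd1 : (1 : ℝ) ≤ (d : ℝ) := by exact_mod_cast hd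
  have hlogk : (0 : ℝ) ≤ Real.log k := Real.log_nonneg (by exact_mod_cast hk)
  have hlog2k : Real.log (2 * (k : ℝ)) = Real.log 2 + Real.log k :=
    Real.log_mul (by norm_num) (ne_of_gt hk0)
  have hm0 : (0 : ℝ) ≤ (m : ℝ) := Nat.cast_nonneg m
  have hdl2 : (d : ℝ) * 0.6931471803 ≤ (d : ℝ) * Real.log 2 :=
    mul_le_mul_of_nonneg_left hlog2.le hd0.le
  have hdlk : (0 : ℝ) ≤ (d : ℝ) * Real.log k := mul_nonneg hd0.le hlogk
  by_cases hcase : m ≤ 9 * d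
  · have hA : (m : ℝ) ≤ 9 * (d : ℝ) := by exact_mod_cast hcase
    rw [hlog2k]
    nlinarith [hA, hdl2, hdlk]
  · push_neg at hcase
    have hm1 : 1 ≤ m := by omega
    -- The set of all points appearing in bags of S
    set P : Finset X := S.biUnion (fun s => Finset.image s.1 Finset.univ) with hPdef
    have hmemP : ∀ s ∈ S, ∀ j : Fin k, s.1 j ∈ P := by
      intro s hs j
      exact Finset.mem_biUnion.2 ⟨s, hs, Finset.mem_image_of_mem _ (Finset.mem_univ j)⟩
    -- The trace family of F on P
    set 𝒜 : Finset (Finset X) := P.powerset.filter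
        (fun T => ∃ f ∈ F, ∀ x ∈ P, (f x = true ↔ x ∈ T)) with h𝒜def
    -- Step 1: 2^m ≤ #𝒜
    have hex : ∀ T ∈ S.powerset, ∃ f, f ∈ F ∧
        ∀ z ∈ S, (((∑ j, bval (f (z.1 j))) / (k : ℝ) ≠ z.2) ↔ z ∈ T) := by
      intro T hT
      obtain ⟨g, hgF, hgT⟩ := hS T (Finset.mem_powerset.1 hT)
      obtain ⟨f, hfF, rfl⟩ := hgF
      refine ⟨f, hfF, fun z hz => ?_⟩
      simpa using hgT z hz
    choose! fT hfF hfT using hex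
    have hstep1 : 2 ^ m ≤ 𝒜.card := by
      have hmaps : ∀ T ∈ S.powerset,
          (P.filter (fun x => fT T x = true)) ∈ 𝒜 := by
        intro T hT
        refine Finset.mem_filter.2 ⟨Finset.mem_powerset.2 (Finset.filter_subset _ _),
          fT T, hfF T hT, fun x hx => ?_⟩
        simp [Finset.mem_filter, hx]
      have hinj : Set.InjOn (fun T => P.filter (fun x => fT T x = true))
          (S.powerset : Set (Finset ((Fin k → X) × ℝ))) := by
        intro T hT T' hT' hEq
        have hT1 : T ∈ S.powerset := hT
        have hT1' : T' ∈ S.powerset := hT'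
        have hEq' : P.filter (fun x => fT T x = true)
            = P.filter (fun x => fT T' x = true) := hEq
        have hagree : ∀ x ∈ P, fT T x = fT T' x := by
          intro x hx
          have h1 : (fT T x = true) ↔ (fT T' x = true) := by
            constructor
            · intro h
              have hmem : x ∈ P.filter (fun x => fT T x = true) :=
                Finset.mem_filter.2 ⟨hx, h⟩
              rw [hEq'] at hmem
              exact (Finset.mem_filter.1 hmem).2
            · intro h
              have hmem : x ∈ P.filter (fun x => fT T' x = true) :=
                Finset.mem_filter.2 ⟨hx, h⟩
              rw [← hEq'] at hmem
              exact (Finset.mem_filter.1 hmem).2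
          cases hb : fT T x <;> cases hb' : fT T' x <;> simp_all
        have hiff : ∀ z ∈ S, (z ∈ T ↔ z ∈ T') := by
          intro z hz
          have hsum : (∑ j, bval (fT T (z.1 j))) = ∑ j, bval (fT T' (z.1 j)) :=
            Finset.sum_congr rfl fun j _ => by rw [hagree _ (hmemP z hz j)]
          rw [← hfT T hT1 z hz, ← hfT T' hT1' z hz, hsum]
        have hTS := Finset.mem_powerset.1 hT1
        have hTS' := Finset.mem_powerset.1 hT1'
        apply Finset.Subset.antisymm
        · intro z hz; exact (hiff z (hTS hz)).1 hz
        · intro z hz; exact (hiff z (hTS' hz)).2 hz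
      have := Finset.card_le_card_of_injOn _ hmaps hinj
      simpa [Finset.card_powerset] using this
    -- Step 2: #𝒜 ≤ ∑_{i≤d} C(mk, i)
    have hPcard : P.card ≤ m * k := by
      calc P.card ≤ ∑ s ∈ S, (Finset.image s.1 Finset.univ).card :=
            Finset.card_biUnion_le
        _ ≤ ∑ _s ∈ S, k := Finset.sum_le_sum fun s _ =>
            le_trans Finset.card_image_le (by simp)
        _ = m * k := by simp [hm, mul_comm]
    have hshatsub : 𝒜.shatterer ⊆
        (Finset.range (d + 1)).biUnion (fun i => P.powersetCard i) := by
      intro u hu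
      have hu' : 𝒜.Shatters u := Finset.mem_shatterer.1 hu
      have huP : u ⊆ P := by
        obtain ⟨A, hA, hAu⟩ := hu' (Finset.Subset.refl u)
        have h1 : u ⊆ A := Finset.inter_eq_left.1 hAu
        have h2 : A ⊆ P := Finset.mem_powerset.1 (Finset.mem_filter.1 hA).1
        exact h1.trans h2
      have hFshat : Shatters F u := by
        intro T hTu
        obtain ⟨A, hA, hAT⟩ := hu' hTu
        obtain ⟨_, f, hfF', hfA⟩ := Finset.mem_filter.1 hA
        refine ⟨f, hfF', fun z hz => ?_⟩
        rw [hfA z (huP hz), ← hAT, Finset.mem_inter]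
        simp [hz]
      have hcard := hVC u hFshat
      exact Finset.mem_biUnion.2 ⟨u.card, Finset.mem_range.2 (by omega),
        Finset.mem_powersetCard.2 ⟨huP, rfl⟩⟩
    have hstep2 : 𝒜.card ≤ ∑ i ∈ Finset.range (d + 1), (m * k).choose i := by
      calc 𝒜.card ≤ 𝒜.shatterer.card := Finset.card_le_card_shatterer 𝒜
        _ ≤ ((Finset.range (d + 1)).biUnion fun i => P.powersetCard i).card :=
            Finset.card_le_card hshatsub
        _ ≤ ∑ i ∈ Finset.range (d + 1), (P.powersetCard i).card :=
            Finset.card_biUnion_le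
        _ = ∑ i ∈ Finset.range (d + 1), P.card.choose i := by
            simp [Finset.card_powersetCard]
        _ ≤ ∑ i ∈ Finset.range (d + 1), (m * k).choose i :=
            Finset.sum_le_sum fun i _ => Nat.choose_le_choose i hPcard
    -- Real-valued chain
    have hdmk : d ≤ m * k :=
      le_trans (by omega) (Nat.le_mul_of_pos_right m (by omega))
    have hreal : ((2 : ℝ)) ^ m ≤ Real.exp d * (((m * k : ℕ) : ℝ) / d) ^ d := by
      calc ((2 : ℝ)) ^ m = ((2 ^ m : ℕ) : ℝ) := by push_cast; ring
        _ ≤ ((∑ i ∈ Finset.range (d + 1), (m * k).choose i : ℕ) : ℝ) := by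
            exact_mod_cast le_trans hstep1 hstep2
        _ = ∑ i ∈ Finset.range (d + 1), ((m * k).choose i : ℝ) := by push_cast; ring
        _ ≤ Real.exp d * (((m * k : ℕ) : ℝ) / d) ^ d :=
            sum_choose_le_exp_mul_aux _ _ hd hdmk
    have hmk0 : (0 : ℝ) < ((m * k : ℕ) : ℝ) / d := by
      have : 0 < m * k := Nat.mul_pos (by omega) (by omega)
      have : (0 : ℝ) < ((m * k : ℕ) : ℝ) := by exact_mod_cast this
      positivity
    have hlogle := Real.log_le_log (by positivity) hreal
    rw [Real.log_pow, Real.log_mul (Real.exp_ne_zero _) (by positivity),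
      Real.log_exp, Real.log_pow] at hlogle
    have hsplit : (((m * k : ℕ) : ℝ)) / d = (k : ℝ) * ((m : ℝ) / d) := by
      push_cast; ring
    rw [hsplit, Real.log_mul (ne_of_gt hk0) (by positivity)] at hlogle
    -- hlogle : m * log 2 ≤ d + d * (log k + log (m/d))
    have hmd0 : (0 : ℝ) < (m : ℝ) / d := by positivity
    have hlogm : Real.log ((m : ℝ) / d) ≤ ((m : ℝ) / d) / Real.exp 1 :=
      log_le_div_exp_aux hmd0
    have h368 : ((m : ℝ) / d) / Real.exp 1 ≤ 0.368 * ((m : ℝ) / d) := by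
      rw [div_le_iff₀ (Real.exp_pos 1)]
      nlinarith [Real.exp_one_gt_d9, hmd0.le]
    have h1 : (d : ℝ) * Real.log ((m : ℝ) / d) ≤ 0.368 * m := by
      calc (d : ℝ) * Real.log ((m : ℝ) / d)
          ≤ (d : ℝ) * (0.368 * ((m : ℝ) / d)) :=
            mul_le_mul_of_nonneg_left (hlogm.trans h368) hd0.le
        _ = 0.368 * m := by field_simp
    have hfin : (m : ℝ) * Real.log 2 ≤ (d : ℝ) + (d : ℝ) * Real.log k + 0.368 * m := by
      nlinarith [hlogle, h1]
    rw [hlog2k]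
    have hml2 : (m : ℝ) * 0.6931471803 ≤ (m : ℝ) * Real.log 2 :=
      mul_le_mul_of_nonneg_left hlog2.le hm0
    nlinarith [hfin, hml2, hdl2, hdlk, hd1]

/-- the VC dimension of the proportion-mismatch class is
`O(d·log k)`. There is an absolute constant `C > 0` such that if `F` has VC dimension
at most `d ≥ 1` and `k ≥ 1`, every set shattered by `G = {g_f : f ∈ F}` has size at most
`C·d·log(2k)`. -/
theorem vc_dimension_mismatch_class :
    ∃ C : ℝ, 0 < C ∧
      ∀ (X : Type) (F : Set (X → Bool)) (d k : ℕ), 1 ≤ d → 1 ≤ k →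
        VCDimLE F d →
        ∀ S : Finset ((Fin k → X) × ℝ), Shatters (mismatchClass F k) S →
          (S.card : ℝ) ≤ C * (d : ℝ) * Real.log (2 * (k : ℝ)) :=
  vc_dimension_mismatch_class_aux

end LLP
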